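/- Let n be prime, k ∈ ℕ, and let X, Y ⊆ ℤ/nℤ be k-element sets with |Y +̂ Y| = k(k−1)/2 (all pairwise sums of distinct elements of Y are distinct). Suppose every maximal independent set of the graph on vertex set Y with edges {y₁, y₂} whenever y₁ + y₂ ∈ X +̂ X has size at least t. Then |(X +̂ X) ∩ (Y +̂ Y)| ≤ k(k − t)/2. -/

import Mathlib

open Classical

/-- If `Y` has all pairwise sums of distinct elements distinct and every maximal
independent set of the Cayley sum graph over `X +̂ X` restricted to `Y` has at
least `t` vertices, then `|(X +̂ X) ∩ (Y +̂ Y)| ≤ k(k − t)/2`. -/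
theorem intersection_of_restricted_sumsets (n k t : ℕ) (hn : n.Prime)
    (X Y : Finset (ZMod n)) (hX : X.card = k) (hY : Y.card = k)
    (hYsum : (Y.offDiag.image fun p => p.1 + p.2).card = k * (k - 1) / 2)
    (hmax : ∀ I : Finset (ZMod n), I ⊆ Y →
      (∀ y₁ ∈ I, ∀ y₂ ∈ I, y₁ ≠ y₂ → y₁ + y₂ ∉ X.offDiag.image fun p => p.1 + p.2) →
      (∀ J : Finset (ZMod n), J ⊆ Y →
        (∀ y₁ ∈ J, ∀ y₂ ∈ J, y₁ ≠ y₂ → y₁ + y₂ ∉ X.offDiag.image fun p => p.1 + p.2) →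
        I ⊆ J → J = I) →
      t ≤ I.card) :
    ((((X.offDiag.image fun p => p.1 + p.2) ∩
        (Y.offDiag.image fun p => p.1 + p.2)).card : ℝ)) ≤
      k * ((k : ℝ) - t) / 2 := by
  classical
  set A := X.offDiag.image fun p => p.1 + p.2 with hA
  set B := Y.offDiag.image fun p => p.1 + p.2 with hB
  set T := Y.offDiag.filter (fun p => p.1 + p.2 ∈ A) with hT
  -- every fiber of the sum map over B has exactly 2 elements
  have hfib2 : ∀ s ∈ B, 2 ≤ (Y.offDiag.filter (fun p => p.1 + p.2 = s)).card := by
    intro s hs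
    obtain ⟨p, hp, hps⟩ := Finset.mem_image.1 hs
    rw [Finset.mem_offDiag] at hp
    have hp2 : (p.2, p.1) ∈ Y.offDiag := Finset.mem_offDiag.2 ⟨hp.2.1, hp.1, fun h => hp.2.2 h.symm⟩
    refine Finset.one_lt_card.2 ⟨p, ?_, (p.2, p.1), ?_, ?_⟩
    · exact Finset.mem_filter.2 ⟨Finset.mem_offDiag.2 hp, hps⟩
    · exact Finset.mem_filter.2 ⟨hp2, by rw [← hps]; exact add_comm _ _⟩
    · intro h
      exact hp.2.2 (congrArg Prod.fst h)
  have hsumfib : ∑ s ∈ B, (Y.offDiag.filter (fun p => p.1 + p.2 = s)).card = k * (k - 1) := by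
    rw [← Finset.card_eq_sum_card_fiberwise (fun p hp => Finset.mem_image_of_mem _ hp)]
    rw [Finset.offDiag_card, hY, ← Nat.mul_pred]
    rfl
  have h2dvd : 2 ∣ k * (k - 1) := by
    rcases Nat.even_or_odd k with h | h
    · exact Dvd.dvd.mul_right h.two_dvd _
    · exact Dvd.dvd.mul_left ((Nat.Odd.sub_odd h odd_one).two_dvd) _
  have hfibeq : ∀ s ∈ B, (Y.offDiag.filter (fun p => p.1 + p.2 = s)).card = 2 := by
    have heq : ∑ s ∈ B, (2 : ℕ) = ∑ s ∈ B, (Y.offDiag.filter (fun p => p.1 + p.2 = s)).card := by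
      rw [hsumfib, Finset.sum_const, smul_eq_mul, hYsum, Nat.div_mul_cancel h2dvd]
    intro s hs
    exact ((Finset.sum_eq_sum_iff_of_le hfib2).1 heq s hs).symm
  -- counting T by sums: T.card = 2 * |A ∩ B|
  have hTmem : ∀ p ∈ T, p.1 + p.2 ∈ A ∩ B := by
    intro p hp
    rw [hT, Finset.mem_filter] at hp
    exact Finset.mem_inter.2 ⟨hp.2, Finset.mem_image_of_mem _ hp.1⟩
  have hTcard : T.card = 2 * (A ∩ B).card := by
    rw [Finset.card_eq_sum_card_fiberwise hTmem]
    rw [Finset.sum_congr rfl (fun s hs => ?_), Finset.sum_const, smul_eq_mul, mul_comm]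
    have hsA : s ∈ A := (Finset.mem_inter.1 hs).1
    have hsB : s ∈ B := (Finset.mem_inter.1 hs).2
    rw [← hfibeq s hsB]
    congr 1
    rw [hT, Finset.filter_filter]
    apply Finset.filter_congr
    intro p hp
    constructor
    · intro h; exact h.2
    · intro h; exact ⟨h ▸ hsA, h⟩
  -- degree bound: for each v ∈ Y, deg(v) + t ≤ k
  have hdeg : ∀ v ∈ Y, (T.filter (fun p => p.1 = v)).card + t ≤ k := by
    intro v hv
    set N := Y.filter (fun w => v ≠ w ∧ v + w ∈ A) with hN
    have hdegN : (T.filter (fun p => p.1 = v)).card ≤ N.card := by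
      apply Finset.card_le_card_of_injOn (fun p => p.2)
      · intro p hp
        rw [Finset.mem_coe, Finset.mem_filter, hT, Finset.mem_filter] at hp
        obtain ⟨⟨hpo, hpA⟩, hp1⟩ := hp
        rw [Finset.mem_offDiag] at hpo
        exact Finset.mem_filter.2 ⟨hpo.2.1, by rw [← hp1]; exact ⟨hpo.2.2, hpA⟩⟩
      · intro p hp q hq hpq
        rw [Finset.mem_coe, Finset.mem_filter] at hp hq
        exact Prod.ext (hp.2.trans hq.2.symm) hpq
    -- find a maximal independent set containing v
    set P : Finset (ZMod n) → Prop :=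
      fun I => v ∈ I ∧ ∀ y₁ ∈ I, ∀ y₂ ∈ I, y₁ ≠ y₂ → y₁ + y₂ ∉ A with hP
    have hne : (Y.powerset.filter P).Nonempty := by
      refine ⟨{v}, Finset.mem_filter.2 ⟨Finset.mem_powerset.2 (Finset.singleton_subset_iff.2 hv), ?_, ?_⟩⟩
      · exact Finset.mem_singleton_self v
      · intro y₁ h₁ y₂ h₂ hne
        rw [Finset.mem_singleton] at h₁ h₂
        exact absurd (h₁.trans h₂.symm) hne
    obtain ⟨I, hImem, hImax⟩ := Finset.exists_max_image _ Finset.card hne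
    rw [Finset.mem_filter, Finset.mem_powerset] at hImem
    obtain ⟨hIY, hvI, hIindep⟩ := hImem
    have htI : t ≤ I.card := by
      apply hmax I hIY hIindep
      intro J hJY hJindep hIJ
      have hJmem : J ∈ Y.powerset.filter P :=
        Finset.mem_filter.2 ⟨Finset.mem_powerset.2 hJY, hIJ hvI, hJindep⟩
      exact (Finset.eq_of_subset_of_card_le hIJ (hImax J hJmem)).symm
    have hdisj : Disjoint N I := by
      rw [Finset.disjoint_left]
      intro w hw hwI
      rw [hN, Finset.mem_filter] at hw
      exact hIindep v hvI w hwI hw.2.1 hw.2.2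
    have hcard : N.card + I.card ≤ k := by
      rw [← Finset.card_union_of_disjoint hdisj, ← hY]
      apply Finset.card_le_card
      intro w hw
      rcases Finset.mem_union.1 hw with h | h
      · exact Finset.mem_of_mem_filter w h
      · exact hIY h
    omega
  -- counting T by first coordinate
  have hTmem1 : ∀ p ∈ T, p.1 ∈ Y := by
    intro p hp
    rw [hT, Finset.mem_filter, Finset.mem_offDiag] at hp
    exact hp.1.1
  have hfinal : T.card + k * t ≤ k * k := by
    rw [Finset.card_eq_sum_card_fiberwise hTmem1]
    calc (∑ v ∈ Y, (T.filter (fun p => p.1 = v)).card) + k * t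
        = ∑ v ∈ Y, ((T.filter (fun p => p.1 = v)).card + t) := by
          rw [Finset.sum_add_distrib, Finset.sum_const, smul_eq_mul, hY]
      _ ≤ ∑ v ∈ Y, k := Finset.sum_le_sum hdeg
      _ = k * k := by rw [Finset.sum_const, smul_eq_mul, hY]
  rw [hTcard] at hfinal
  have : (2 * (A ∩ B).card + k * t : ℝ) ≤ k * k := by exact_mod_cast hfinal
  push_cast at this ⊢
  linarith
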